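/- Let W be the depth-p finite singular module with cyclic vector w satisfying z^p g[[z]]·w = 0, n⁺[[z]]·w = 0, and H z^i w = ⟨a_i, H z^i⟩ w for H ∈ h, 0 ≤ i ≤ p-1, inside a smooth level-κ affine module. Then for n > 2(p-1) the Sugawara operator L_n annihilates w, and for p ≤ n ≤ 2(p-1) one has L_n w = (2(κ+h^∨))^{-1} ∑_{j=1-p+n}^{p-1} (a_j | a_{n-j}) · w, while L_{p-1} w = (2(κ+h^∨))^{-1} (∑_{j=0}^{p-1} (a_j | a_{p-1-j}) + 2p(ρ | a_{p-1})) · w. -/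

import Mathlib

open Finset

/-- A smooth representation of the affine Lie algebra `ĝ = g((z)) ⊕ ℂK` of level `κ`,
recorded through the action operators of the elements `X z^n`. -/
structure AffineRepresentation (g : Type*) [LieRing g] [LieAlgebra ℂ g]
    (B : LinearMap.BilinForm ℂ g) (κ : ℂ)
    (M : Type*) [AddCommGroup M] [Module ℂ M] where
  /-- The action of `X z^n`. -/
  act : g →ₗ[ℂ] ℤ → Module.End ℂ M
  /-- The affine commutation relations, with the central element acting as `κ`. -/
  comm : ∀ (X Y : g) (m n : ℤ) (v : M),
    act X m (act Y n v) - act Y n (act X m v)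
      = act ⁅X, Y⁆ (m + n) v + (if m + n = 0 then (m : ℂ) * B X Y * κ else 0) • v
  /-- Smoothness: every vector is annihilated by `z^N g[[z]]` for `N ≫ 0`. -/
  smooth : ∀ (v : M) (X : g), ∃ N : ℕ, ∀ n : ℤ, (N : ℤ) ≤ n → act X n v = 0

section

variable {g : Type*} [LieRing g] [LieAlgebra ℂ g]
  {B : LinearMap.BilinForm ℂ g} {κ : ℂ}
  {M : Type*} [AddCommGroup M] [Module ℂ M]

variable (ρ : AffineRepresentation g B κ M)

/-- The normally-ordered product `:X z^{-j} Y z^{n+j}:` acting on a vector: the operator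
attached to the nonnegative power of `z` is applied first (i.e. placed to the right). -/
noncomputable def nord (X Y : g) (j n : ℤ) (v : M) : M :=
  if 0 ≤ n + j then ρ.act X (-j) (ρ.act Y (n + j) v)
  else ρ.act Y (n + j) (ρ.act X (-j) v)

/-- The Sugawara operator `L_n = (2(κ+h^∨))⁻¹ ∑_{j∈ℤ} ∑ₖ :Xₖ z^{-j} Xᵏ z^{n+j}:` acting
on a smooth module, computed in a Cartan–Weyl adapted pair of dual bases: `(Hᵢ)` is an
orthonormal basis of the Cartan subalgebra (self-dual), and for each positive root `α`
(indexed by `P`) the dual of `E_α` is `((α|α)/2)·F_α` and the dual of `F_α` is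
`((α|α)/2)·E_α`; `ns q = (α|α)` denotes the squared length of the root `q`. -/
noncomputable def sugawaraL {r : ℕ} (Hb : Fin r → g) {P : Type*} [Fintype P]
    (Ea Fa : P → g) (ns : P → ℂ) (h : ℂ) (n : ℤ) (v : M) : M :=
  (2 * (κ + h))⁻¹ •
    ∑ᶠ j : ℤ,
      (∑ i, nord ρ (Hb i) (Hb i) j n v
        + ∑ q, (ns q / 2) • (nord ρ (Fa q) (Ea q) j n v + nord ρ (Ea q) (Fa q) j n v))

end

/-- The cyclic vector `w` of the depth-`p` finite singular module, inside a smooth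
level-`κ` module, is a common eigenvector of the Sugawara operators `L_n` for
`n ≥ p-1`: `L_n w = 0` for `n > 2(p-1)`,
`L_n w = (2(κ+h^∨))⁻¹ ∑_{j=1-p+n}^{p-1} (a_j|a_{n-j}) · w` for `p ≤ n ≤ 2(p-1)`, and
`L_{p-1} w = (2(κ+h^∨))⁻¹ (∑_{j=0}^{p-1} (a_j|a_{p-1-j}) + 2p(ρ|a_{p-1})) · w`.
Here `(aᵢ)` are the Cartan parameters of the singular character (with `a₀ = λ` the tame
part), expressed in coordinates with respect to an orthonormal basis `(Hᵢ)` of the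
Cartan subalgebra, `(·|·)` denotes the induced pairing `∑ᵢ xᵢyᵢ` of coordinate vectors,
`αv q` are the coordinates of the positive root `q`, and `ρv = (1/2)∑_{α>0} α` is the
half-sum of positive roots.  The relations defining `w` are `z^p g[[z]]·w = 0`,
`n⁺[[z]]·w = 0` and `H z^i w = ⟨aᵢ, H z^i⟩ w`. -/
theorem sugawara_eigenvalues_cyclic_vector
    {g : Type*} [LieRing g] [LieAlgebra ℂ g] [Module.Finite ℂ g]
    {B : LinearMap.BilinForm ℂ g} {κ : ℂ}
    {M : Type*} [AddCommGroup M] [Module ℂ M]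
    (ρ : AffineRepresentation g B κ M)
    {r : ℕ} (Hb : Fin r → g)
    (horth : ∀ i j, B (Hb i) (Hb j) = if i = j then 1 else 0)
    {P : Type*} [Fintype P] (Ea Fa : P → g) (αv : P → Fin r → ℂ)
    (hns : ∀ q, (∑ i, αv q i * αv q i) ≠ 0)
    (hEF : ∀ q, ⁅Ea q, Fa q⁆
      = ∑ i, (2 / (∑ i', αv q i' * αv q i') * αv q i) • Hb i)
    (hroot : ∀ q i j, ρ.act ⁅Hb i, Ea q⁆ j = αv q i • ρ.act (Ea q) j)
    (h : ℂ) (hκ : κ + h ≠ 0)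
    (p : ℕ) (hp : 1 ≤ p) (a : Fin p → Fin r → ℂ)
    (w : M)
    (hzp : ∀ (X : g) (j : ℤ), (p : ℤ) ≤ j → ρ.act X j w = 0)
    (hnplus : ∀ (q : P) (j : ℤ), 0 ≤ j → ρ.act (Ea q) j w = 0)
    (hcartan : ∀ (i : Fin r) (j : ℤ) (hj : 0 ≤ j) (hj' : j < p),
      ρ.act (Hb i) j w = a ⟨j.toNat, by omega⟩ i • w) :
    -- the integer-indexed coordinates of the Cartan parameters, the pairing `(·|·)` and
    -- the half-sum of positive roots
    ∀ A : ℤ → Fin r → ℂ,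
      (∀ j : ℤ, A j = if h : 0 ≤ j ∧ j < p then a ⟨j.toNat, by omega⟩ else 0) →
    ∀ ip : (Fin r → ℂ) → (Fin r → ℂ) → ℂ,
      (∀ x y, ip x y = ∑ i, x i * y i) →
    ∀ ρv : Fin r → ℂ, (∀ i, ρv i = (2 : ℂ)⁻¹ * ∑ q, αv q i) →
    (∀ n : ℤ, 2 * ((p : ℤ) - 1) < n →
      sugawaraL ρ Hb Ea Fa (fun q => ∑ i, αv q i * αv q i) h n w = 0) ∧
    (∀ n : ℤ, (p : ℤ) ≤ n → n ≤ 2 * ((p : ℤ) - 1) →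
      sugawaraL ρ Hb Ea Fa (fun q => ∑ i, αv q i * αv q i) h n w
        = ((2 * (κ + h))⁻¹
            * ∑ j ∈ Finset.Icc (1 - (p : ℤ) + n) ((p : ℤ) - 1), ip (A j) (A (n - j))) • w) ∧
    (sugawaraL ρ Hb Ea Fa (fun q => ∑ i, αv q i * αv q i) h ((p : ℤ) - 1) w
      = ((2 * (κ + h))⁻¹
          * ((∑ j ∈ Finset.range p, ip (A j) (A ((p : ℤ) - 1 - j)))
            + 2 * p * ip ρv (A ((p : ℤ) - 1)))) • w) := by
  intro A hA ip hip ρv hρv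
  have hA0 : ∀ j : ℤ, ¬(0 ≤ j ∧ j < (p : ℤ)) → A j = 0 := by
    intro j hj; rw [hA]; exact dif_neg hj
  have hipz : ∀ (j : ℤ) (y : Fin r → ℂ), ¬(0 ≤ j ∧ j < (p : ℤ)) → ip (A j) y = 0 := by
    intro j y hj; rw [hip, hA0 j hj]; simp
  have hipz' : ∀ (x : Fin r → ℂ) (j : ℤ), ¬(0 ≤ j ∧ j < (p : ℤ)) → ip x (A j) = 0 := by
    intro x j hj; rw [hip, hA0 j hj]; simp
  have hipcomm : ∀ x y, ip x y = ip y x := by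
    intro x y; rw [hip, hip]; exact Finset.sum_congr rfl fun i _ => mul_comm _ _
  have hH : ∀ (i : Fin r) (m : ℤ), 0 ≤ m → ρ.act (Hb i) m w = A m i • w := by
    intro i m hm
    by_cases hm' : m < (p : ℤ)
    · rw [hcartan i m hm hm', hA, dif_pos ⟨hm, hm'⟩]
    · rw [hzp _ m (by omega), hA0 m (by omega)]; simp
  have h2 : ∀ y : ℂ, (2 : ℂ) * (2⁻¹ * y) = y := by
    intro y; rw [← mul_assoc]; norm_num
  have hsumρ : ∀ x : Fin r → ℂ, ∑ q, ∑ i, αv q i * x i = 2 * ip ρv x := by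
    intro x
    rw [hip, Finset.mul_sum, Finset.sum_comm]
    refine Finset.sum_congr rfl fun i _ => ?_
    rw [hρv i, mul_assoc (2 : ℂ)⁻¹, h2, Finset.sum_mul]
  have key : ∀ n : ℤ, (p : ℤ) - 1 ≤ n → ∀ j : ℤ,
      (∑ i, nord ρ (Hb i) (Hb i) j n w
        + ∑ q, ((∑ i, αv q i * αv q i) / 2) •
            (nord ρ (Fa q) (Ea q) j n w + nord ρ (Ea q) (Fa q) j n w))
      = (ip (A (-j)) (A (n + j))
          + if n = (p : ℤ) - 1 ∧ 1 - (p : ℤ) ≤ j ∧ j ≤ 0 then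
              2 * ip ρv (A ((p : ℤ) - 1)) else 0) • w := by
    intro n hn j
    by_cases hc : 0 ≤ n + j
    · by_cases hj : j ≤ 0
      · -- main case
        have hEAz : ∀ q, ρ.act (Ea q) (n + j) w = 0 := fun q => hnplus q _ hc
        have hEAz' : ∀ q, ρ.act (Ea q) (-j) w = 0 := fun q => hnplus q _ (by omega)
        have hFE : ∀ q, nord ρ (Fa q) (Ea q) j n w = 0 := by
          intro q; simp only [nord]; rw [if_pos hc, hEAz q, map_zero]
        have hEFcomm : ∀ q, nord ρ (Ea q) (Fa q) j n w
            = (∑ i, 2 / (∑ i', αv q i' * αv q i') * αv q i * A n i) • w := by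
          intro q
          have hc2 := ρ.comm (Ea q) (Fa q) (-j) (n + j) w
          rw [hEAz' q, map_zero, sub_zero] at hc2
          have hn0 : -j + (n + j) = n := by ring
          rw [hn0] at hc2
          have hcen : (if n = 0 then ((-j : ℤ) : ℂ) * B (Ea q) (Fa q) * κ else 0) • w
              = 0 := by
            by_cases hn1 : n = 0
            · have hj0 : j = 0 := by omega
              subst hj0; simp [hn1]
            · simp [hn1]
          simp only [nord]
          rw [if_pos hc, hc2, hcen, add_zero, hEF q]
          have hlin : ρ.act (∑ i, (2 / (∑ i', αv q i' * αv q i') * αv q i) • Hb i) n w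
              = ∑ i, (2 / (∑ i', αv q i' * αv q i') * αv q i) • ρ.act (Hb i) n w := by
            simp [map_sum, map_smul, Finset.sum_apply, Pi.smul_apply,
              LinearMap.sum_apply, LinearMap.smul_apply]
          rw [hlin]
          calc ∑ i, (2 / (∑ i', αv q i' * αv q i') * αv q i) • ρ.act (Hb i) n w
              = ∑ i, (2 / (∑ i', αv q i' * αv q i') * αv q i * A n i) • w :=
                Finset.sum_congr rfl fun i _ => by rw [hH i n (by omega), smul_smul]
            _ = (∑ i, 2 / (∑ i', αv q i' * αv q i') * αv q i * A n i) • w :=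
                (Finset.sum_smul).symm
        have hroot' : ∀ q : P, ((∑ i, αv q i * αv q i) / 2) •
            (nord ρ (Fa q) (Ea q) j n w + nord ρ (Ea q) (Fa q) j n w)
            = (∑ i, αv q i * A n i) • w := by
          intro q
          rw [hFE q, zero_add, hEFcomm q, smul_smul]
          congr 1
          rw [Finset.mul_sum]
          refine Finset.sum_congr rfl fun i _ => ?_
          have hq := hns q
          field_simp
          have hq2 : (∑ x, αv q x ^ 2) ≠ 0 := by simpa [sq] using hq
          rw [mul_assoc, mul_div_cancel_left₀ _ hq2]
        have hcart : ∑ i, nord ρ (Hb i) (Hb i) j n w = ip (A (-j)) (A (n + j)) • w := by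
          rw [hip, Finset.sum_smul]
          refine Finset.sum_congr rfl fun i _ => ?_
          simp only [nord]
          rw [if_pos hc, hH i (n + j) hc, map_smul, hH i (-j) (by omega), smul_smul,
            mul_comm]
        rw [hcart, Finset.sum_congr rfl fun q _ => hroot' q, ← Finset.sum_smul, ← add_smul]
        congr 1
        rw [hsumρ (A n)]
        rcases eq_or_lt_of_le hn with hn' | hn'
        · rw [if_pos ⟨hn'.symm, by omega, hj⟩, ← hn']
        · rw [if_neg (by omega), hipz' ρv n (by omega), mul_zero]
      · push_neg at hj
        have hz1 : ∀ X : g, ρ.act X (n + j) w = 0 := fun X => hzp X _ (by omega)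
        rw [hipz' _ (n + j) (by omega), if_neg (by omega)]
        simp [nord, hc, hz1]
    · have hz1 : ∀ X : g, ρ.act X (-j) w = 0 := fun X => hzp X _ (by omega)
      rw [hipz' _ (n + j) (by omega), if_neg (by omega)]
      simp [nord, hc, hz1]
  have main : ∀ n : ℤ, (p : ℤ) - 1 ≤ n →
      sugawaraL ρ Hb Ea Fa (fun q => ∑ i, αv q i * αv q i) h n w
      = ((2 * (κ + h))⁻¹ * ∑ j ∈ Finset.Icc (1 - (p : ℤ)) 0,
          (ip (A (-j)) (A (n + j))
            + if n = (p : ℤ) - 1 ∧ 1 - (p : ℤ) ≤ j ∧ j ≤ 0 then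
                2 * ip ρv (A ((p : ℤ) - 1)) else 0)) • w := by
    intro n hn
    rw [sugawaraL, finsum_congr (key n hn)]
    rw [finsum_eq_sum_of_support_subset _
      (s := Finset.Icc (1 - (p : ℤ)) 0) ?_]
    · rw [← Finset.sum_smul, smul_smul]
    · intro j hj
      simp only [Finset.coe_Icc, Set.mem_Icc]
      by_contra hmem
      apply hj
      simp only []
      rw [hipz (-j) _ (by omega), if_neg (by omega), add_zero, zero_smul]
  refine ⟨?_, ?_, ?_⟩
  · intro n hn
    rw [main n (by omega)]
    have hz : ∀ j ∈ Finset.Icc (1 - (p : ℤ)) 0,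
        (ip (A (-j)) (A (n + j))
          + if n = (p : ℤ) - 1 ∧ 1 - (p : ℤ) ≤ j ∧ j ≤ 0 then
              2 * ip ρv (A ((p : ℤ) - 1)) else 0) = 0 := by
      intro j hj
      rw [Finset.mem_Icc] at hj
      rw [hipz' _ (n + j) (by omega), if_neg (by omega), add_zero]
    rw [Finset.sum_eq_zero hz, mul_zero, zero_smul]
  · intro n hn hn2
    rw [main n (by omega)]
    congr 2
    calc ∑ j ∈ Finset.Icc (1 - (p : ℤ)) 0,
          (ip (A (-j)) (A (n + j))
            + if n = (p : ℤ) - 1 ∧ 1 - (p : ℤ) ≤ j ∧ j ≤ 0 then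
                2 * ip ρv (A ((p : ℤ) - 1)) else 0)
        = ∑ j ∈ Finset.Icc (1 - (p : ℤ)) 0, ip (A (-j)) (A (n + j)) :=
          Finset.sum_congr rfl fun j hj => by rw [if_neg (by omega), add_zero]
      _ = ∑ j ∈ Finset.Icc (1 - (p : ℤ) + n) n, ip (A j) (A (n - j)) := by
          refine Finset.sum_nbij' (fun j => n + j) (fun j => j - n) ?_ ?_ ?_ ?_ ?_
          · intro a ha; simp only [Finset.mem_Icc] at *; omega
          · intro a ha; simp only [Finset.mem_Icc] at *; omega
          · intro a _; ring
          · intro a _; ring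
          · intro a _
            rw [hipcomm]
            have e1 : n - (n + a) = -a := by ring
            rw [e1]
      _ = ∑ j ∈ Finset.Icc (1 - (p : ℤ) + n) ((p : ℤ) - 1), ip (A j) (A (n - j)) := by
          refine (Finset.sum_subset (Finset.Icc_subset_Icc_right (by omega)) ?_).symm
          intro x hx hx2
          rw [Finset.mem_Icc] at hx
          simp only [Finset.mem_Icc, not_and, not_le] at hx2
          exact hipz x _ (by omega)
  · rw [main ((p : ℤ) - 1) (by omega)]
    congr 2
    rw [Finset.sum_add_distrib]
    congr 1
    · refine Finset.sum_nbij' (fun j => (-j).toNat) (fun k => -(k : ℤ)) ?_ ?_ ?_ ?_ ?_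
      · intro a ha; simp only [Finset.mem_Icc] at ha; simp only [Finset.mem_range]; omega
      · intro a ha; simp only [Finset.mem_range] at ha; simp only [Finset.mem_Icc]; omega
      · intro a ha; simp only [Finset.mem_Icc] at ha; omega
      · intro a ha; simp only [Finset.mem_range] at ha; omega
      · intro a ha
        rw [Finset.mem_Icc] at ha
        have e1 : (((-a).toNat : ℤ)) = -a := by omega
        rw [e1]
        have e2 : (p : ℤ) - 1 - -a = (p : ℤ) - 1 + a := by ring
        rw [e2]
    · have hconst : ∀ j ∈ Finset.Icc (1 - (p : ℤ)) 0,
          (if (p : ℤ) - 1 = (p : ℤ) - 1 ∧ 1 - (p : ℤ) ≤ j ∧ j ≤ 0 then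
              2 * ip ρv (A ((p : ℤ) - 1)) else 0) = 2 * ip ρv (A ((p : ℤ) - 1)) := by
        intro j hj
        rw [Finset.mem_Icc] at hj
        rw [if_pos ⟨rfl, hj.1, hj.2⟩]
      rw [Finset.sum_congr rfl hconst, Finset.sum_const, Int.card_Icc]
      have e3 : (0 + 1 - (1 - (p : ℤ))).toNat = p := by omega
      rw [e3, nsmul_eq_mul]
      ring
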